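/- (Corollary to Theorem 3.1) Let (H,J,K) and (H̃,J̃,K̃) be two triples of 4×4 real matrices, each satisfying the Hamiltonian conditions (H² = J² = K² = HJK = −E and H̃² = J̃² = K̃² = H̃J̃K̃ = −E), with associated block maps P and P̃ respectively. If A, B ∈ ℍ^{m×m} satisfy P(A) = P̃(B), then A and B are similar as quaternion matrices: there exists an invertible matrix U ∈ ℍ^{m×m} with U⁻¹AU = B. -/

import Mathlib

open Matrix

/-- The real `4×4` matrix representation of a quaternion determined by matrices
`H, J, K` (assumed to satisfy the Hamiltonian conditions). -/
noncomputable def qRep (H J K : Matrix (Fin 4) (Fin 4) ℝ) (q : Quaternion ℝ) :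
    Matrix (Fin 4) (Fin 4) ℝ :=
  q.re • (1 : Matrix (Fin 4) (Fin 4) ℝ) + q.imI • H + q.imJ • J + q.imK • K

/-- The block real matrix representation of a quaternion matrix: the `(s,t)` block
of `pRep H J K A` is `qRep H J K (A s t)`. -/
noncomputable def pRep (H J K : Matrix (Fin 4) (Fin 4) ℝ) {m n : ℕ}
    (A : Matrix (Fin m) (Fin n) (Quaternion ℝ)) :
    Matrix (Fin m × Fin 4) (Fin n × Fin 4) ℝ :=
  Matrix.of fun p q => qRep H J K (A p.1 q.1) p.2 q.2

namespace SimAux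

noncomputable abbrev i1 : Quaternion ℝ := ⟨0,1,0,0⟩
noncomputable abbrev j1 : Quaternion ℝ := ⟨0,0,1,0⟩
noncomputable abbrev k1 : Quaternion ℝ := ⟨0,0,0,1⟩

lemma ii : i1 * i1 = -1 := by ext <;> simp [Quaternion.re_one, Quaternion.imI_one, Quaternion.imJ_one, Quaternion.imK_one]
lemma ji : j1 * i1 = -k1 := by ext <;> simp
lemma ki : k1 * i1 = j1 := by ext <;> simp
lemma ij : i1 * j1 = k1 := by ext <;> simp
lemma jj : j1 * j1 = -1 := by ext <;> simp [Quaternion.re_one, Quaternion.imI_one, Quaternion.imJ_one, Quaternion.imK_one]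
lemma kj : k1 * j1 = -i1 := by ext <;> simp
lemma ik : i1 * k1 = -j1 := by ext <;> simp
lemma jk : j1 * k1 = i1 := by ext <;> simp
lemma kk : k1 * k1 = -1 := by ext <;> simp [Quaternion.re_one, Quaternion.imI_one, Quaternion.imJ_one, Quaternion.imK_one]

lemma iiw (w : Quaternion ℝ) : i1 * (i1 * w) = -w := by rw [← mul_assoc, ii]; simp
lemma ijw (w : Quaternion ℝ) : i1 * (j1 * w) = k1 * w := by rw [← mul_assoc, ij]
lemma ikw (w : Quaternion ℝ) : i1 * (k1 * w) = -(j1 * w) := by rw [← mul_assoc, ik]; simp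
lemma jiw (w : Quaternion ℝ) : j1 * (i1 * w) = -(k1 * w) := by rw [← mul_assoc, ji]; simp
lemma jjw (w : Quaternion ℝ) : j1 * (j1 * w) = -w := by rw [← mul_assoc, jj]; simp
lemma jkw (w : Quaternion ℝ) : j1 * (k1 * w) = i1 * w := by rw [← mul_assoc, jk]
lemma kiw (w : Quaternion ℝ) : k1 * (i1 * w) = j1 * w := by rw [← mul_assoc, ki]
lemma kjw (w : Quaternion ℝ) : k1 * (j1 * w) = -(i1 * w) := by rw [← mul_assoc, kj]; simp
lemma kkw (w : Quaternion ℝ) : k1 * (k1 * w) = -w := by rw [← mul_assoc, kk]; simp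

lemma quat_decomp (q : Quaternion ℝ) :
    q = q.re • 1 + q.imI • i1 + q.imJ • j1 + q.imK • k1 := by ext <;> simp [Quaternion.re_one, Quaternion.imI_one, Quaternion.imJ_one, Quaternion.imK_one]

lemma linear_ext (f g : Quaternion ℝ →ₗ[ℝ] Quaternion ℝ)
    (h1 : f 1 = g 1) (hi : f i1 = g i1) (hj : f j1 = g j1) (hk : f k1 = g k1) : f = g := by
  apply LinearMap.ext
  intro q
  rw [quat_decomp q]
  simp only [map_add, _root_.map_smul, h1, hi, hj, hk]

/-- LHS of the projection identity, as a linear map in `q`. -/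
noncomputable def Lmap (γ : Quaternion ℝ →ₗ[ℝ] Quaternion ℝ) (w : Quaternion ℝ) :
    Quaternion ℝ →ₗ[ℝ] Quaternion ℝ where
  toFun q := γ (q * w) - γ (q * (i1 * w)) * i1 - γ (q * (j1 * w)) * j1 - γ (q * (k1 * w)) * k1
  map_add' q r := by
    simp only [add_mul, map_add]
    abel
  map_smul' r q := by
    simp only [smul_mul_assoc, _root_.map_smul, smul_sub, RingHom.id_apply]

lemma proj_right_linear (γ : Quaternion ℝ →ₗ[ℝ] Quaternion ℝ) (w q : Quaternion ℝ) :
    γ (q * w) - γ (q * (i1 * w)) * i1 - γ (q * (j1 * w)) * j1 - γ (q * (k1 * w)) * k1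
      = (γ w - γ (i1 * w) * i1 - γ (j1 * w) * j1 - γ (k1 * w) * k1) * q := by
  have h : Lmap γ w = (LinearMap.mulLeft ℝ
      (γ w - γ (i1 * w) * i1 - γ (j1 * w) * j1 - γ (k1 * w) * k1)) := by
    apply linear_ext
    · simp [Lmap, LinearMap.mulLeft_apply]
    · simp only [Lmap, LinearMap.coe_mk, AddHom.coe_mk, LinearMap.mulLeft_apply,
        iiw, ijw, ikw, map_neg, sub_mul, mul_assoc, ii, ij, ik, ji, ki, mul_neg_one, mul_neg,
        neg_mul, mul_one]
      abel
    · simp only [Lmap, LinearMap.coe_mk, AddHom.coe_mk, LinearMap.mulLeft_apply,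
        jiw, jjw, jkw, map_neg, sub_mul, mul_assoc, ij, jj, kj, mul_neg_one, mul_neg, neg_mul,
        mul_one]
      abel
    · simp only [Lmap, LinearMap.coe_mk, AddHom.coe_mk, LinearMap.mulLeft_apply,
        kiw, kjw, kkw, map_neg, sub_mul, mul_assoc, ik, jk, kk, mul_neg_one, mul_neg, neg_mul,
        mul_one]
      abel
  have := LinearMap.congr_fun h q
  simpa [Lmap, LinearMap.mulLeft_apply] using this

lemma exists_u (γ : Quaternion ℝ →ₗ[ℝ] Quaternion ℝ) (h1 : γ 1 ≠ 0) :
    ∃ w : Quaternion ℝ,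
      γ w - γ (i1 * w) * i1 - γ (j1 * w) * j1 - γ (k1 * w) * k1 ≠ 0 := by
  by_contra hcon
  push_neg at hcon
  have hS : ∀ w : Quaternion ℝ,
      γ w = γ (i1 * w) * i1 + (γ (j1 * w) * j1 + γ (k1 * w) * k1) := by
    intro w
    have h0 := hcon w
    rw [sub_sub, sub_sub, sub_eq_zero] at h0
    exact h0
  have hAi : ∀ w : Quaternion ℝ,
      γ (i1 * w) * i1 = γ w + (γ (j1 * w) * j1 + γ (k1 * w) * k1) := by
    intro w
    have h0 := congrArg (fun x => x * i1) (hS (i1 * w))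
    simp only [iiw, jiw, kiw, map_neg, neg_mul, add_mul, mul_assoc, ii, ji, ki,
      mul_neg_one, mul_neg, mul_one, neg_neg] at h0
    rw [h0]; abel
  have hAj : ∀ w : Quaternion ℝ,
      γ (j1 * w) * j1 = γ w + (γ (i1 * w) * i1 + γ (k1 * w) * k1) := by
    intro w
    have h0 := congrArg (fun x => x * j1) (hS (j1 * w))
    simp only [ijw, jjw, kjw, map_neg, neg_mul, add_mul, mul_assoc, ij, jj, kj,
      mul_neg_one, mul_neg, mul_one, neg_neg] at h0
    rw [h0]; abel
  have hAk : ∀ w : Quaternion ℝ,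
      γ (k1 * w) * k1 = γ w + (γ (i1 * w) * i1 + γ (j1 * w) * j1) := by
    intro w
    have h0 := congrArg (fun x => x * k1) (hS (k1 * w))
    simp only [ikw, jkw, kkw, map_neg, neg_mul, add_mul, mul_assoc, ik, jk, kk,
      mul_neg_one, mul_neg, mul_one, neg_neg] at h0
    rw [h0]; abel
  have hzero : ∀ w : Quaternion ℝ, γ w = 0 := by
    intro w
    set x := γ w with hx
    set a := γ (i1 * w) * i1 with ha
    set b := γ (j1 * w) * j1 with hb
    set c := γ (k1 * w) * k1 with hc
    have hS' : x = a + (b + c) := hS w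
    have hAi' : a = x + (b + c) := hAi w
    have hAj' : b = x + (a + c) := hAj w
    have hAk' : c = x + (a + b) := hAk w
    have half : ∀ y : Quaternion ℝ, y + y = 0 → y = 0 := by
      intro y hy
      have h2 : (2:ℝ) • y = 0 := by rw [two_smul]; exact hy
      exact (smul_eq_zero.mp h2).resolve_left (by norm_num)
    have hbc : b + c = 0 := by
      apply half
      have h7 : x + ((b + c) + (b + c)) = x + 0 := by
        rw [add_zero]
        conv_rhs => rw [hS', hAi']
        abel
      rw [add_zero] at h7
      exact add_left_cancel (h7.trans (add_zero x).symm)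
    have hac : a + c = 0 := by
      apply half
      have h7 : x + ((a + c) + (a + c)) = x + 0 := by
        rw [add_zero]
        conv_rhs => rw [hS', hAj']
        abel
      rw [add_zero] at h7
      exact add_left_cancel (h7.trans (add_zero x).symm)
    have hab : a + b = 0 := by
      apply half
      have h7 : x + ((a + b) + (a + b)) = x + 0 := by
        rw [add_zero]
        conv_rhs => rw [hS', hAk']
        abel
      rw [add_zero] at h7
      exact add_left_cancel (h7.trans (add_zero x).symm)
    have hxa : x = a := by rw [hS', hbc, add_zero]
    have haa : a + a = 0 := by
      have hbna : b = -a := eq_neg_of_add_eq_zero_right hab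
      have hcna : c = -a := eq_neg_of_add_eq_zero_right hac
      have h8 := hbc
      rw [hbna, hcna] at h8
      simpa using congrArg Neg.neg h8
    rw [hxa]
    exact half a haa
  exact h1 (hzero 1)

section Rep

variable (H J K : Matrix (Fin 4) (Fin 4) ℝ)
variable (hH : H * H = -1) (hJ : J * J = -1) (hK : K * K = -1) (hHJK : H * J * K = -1)

lemma qRep_one : qRep H J K 1 = 1 := by simp [qRep, Quaternion.re_one, Quaternion.imI_one, Quaternion.imJ_one, Quaternion.imK_one]

include hH hJ hK hHJK in
lemma qRep_mul (q r : Quaternion ℝ) :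
    qRep H J K (q * r) = qRep H J K q * qRep H J K r := by
  have hHJ : H * J = K := by
    have h1 : H * J * K * K = -K := by rw [hHJK]; simp
    rw [mul_assoc, hK] at h1
    simpa using h1
  have hJK : J * K = H := by
    have h1 : H * (H * J * K) = H * -1 := by rw [hHJK]
    rw [show H * (H * J * K) = (H*H) * (J*K) by noncomm_ring, hH] at h1
    simpa using h1
  have hJH : J * H = -K := by rw [← hJK, show J * (J*K) = (J*J)*K by noncomm_ring, hJ]; simp
  have hKJ : K * J = -H := by rw [← hHJ, mul_assoc, hJ]; simp
  have hHK : H * K = -J := by rw [← hHJ, ← mul_assoc, hH]; simp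
  have hKH : K * H = J := by rw [← hJK, ← mul_assoc, hKJ, neg_mul, hHK]; simp
  simp only [qRep, Quaternion.re_mul, Quaternion.imI_mul, Quaternion.imJ_mul, Quaternion.imK_mul,
    add_mul, mul_add, smul_mul_assoc, mul_smul_comm, smul_smul, one_mul, mul_one,
    hH, hJ, hK, hHJ, hJK, hJH, hKJ, hHK, hKH]
  module

/-- The linear map `q ↦ Q(q) e₀`. -/
noncomputable def alphaMap : Quaternion ℝ →ₗ[ℝ] (Fin 4 → ℝ) where
  toFun q := (qRep H J K q).mulVec (Pi.single 0 1)
  map_add' q r := by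
    show (qRep H J K (q + r)).mulVec (Pi.single 0 1) = _
    have h0 : qRep H J K (q + r) = qRep H J K q + qRep H J K r := by
      simp [qRep]; module
    rw [h0, Matrix.add_mulVec]
  map_smul' r q := by
    show (qRep H J K (r • q)).mulVec (Pi.single 0 1) = _
    have h0 : qRep H J K (r • q) = r • qRep H J K q := by
      simp [qRep]; module
    rw [h0, Matrix.smul_mulVec]
    rfl

lemma alphaMap_one : alphaMap H J K 1 = Pi.single 0 1 := by
  show (qRep H J K 1).mulVec (Pi.single 0 1) = Pi.single 0 1
  rw [qRep_one, Matrix.one_mulVec]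

include hH hJ hK hHJK in
lemma alphaMap_injective : Function.Injective (alphaMap H J K) := by
  rw [← LinearMap.ker_eq_bot, LinearMap.ker_eq_bot']
  intro q hq
  by_contra hq0
  have h1 : (qRep H J K q⁻¹).mulVec ((qRep H J K q).mulVec (Pi.single 0 1))
      = (Pi.single 0 1 : Fin 4 → ℝ) := by
    rw [Matrix.mulVec_mulVec, ← qRep_mul H J K hH hJ hK hHJK,
      inv_mul_cancel₀ hq0, qRep_one, Matrix.one_mulVec]
  have h2 : (qRep H J K q).mulVec (Pi.single 0 1) = 0 := hq
  rw [h2, Matrix.mulVec_zero] at h1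
  have := congrFun h1 0
  simp at this

include hH hJ hK hHJK in
lemma alphaMap_mul (q x : Quaternion ℝ) :
    alphaMap H J K (q * x) = (qRep H J K q).mulVec (alphaMap H J K x) := by
  show (qRep H J K (q * x)).mulVec (Pi.single 0 1)
      = (qRep H J K q).mulVec ((qRep H J K x).mulVec (Pi.single 0 1))
  rw [qRep_mul H J K hH hJ hK hHJK, ← Matrix.mulVec_mulVec]

end Rep

end SimAux

open SimAux in
/-- Corollary to Theorem 3.1: if `P(A) = P̃(B)` for two
Hamiltonian triples, then `A` and `B` are similar quaternion matrices. -/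
theorem similar_of_pRep_eq
    (H J K H' J' K' : Matrix (Fin 4) (Fin 4) ℝ)
    (hH : H * H = -1) (hJ : J * J = -1) (hK : K * K = -1)
    (hHJK : H * J * K = -1)
    (hH' : H' * H' = -1) (hJ' : J' * J' = -1) (hK' : K' * K' = -1)
    (hHJK' : H' * J' * K' = -1) {m : ℕ}
    (A B : Matrix (Fin m) (Fin m) (Quaternion ℝ))
    (hAB : pRep H J K A = pRep H' J' K' B) :
    ∃ U V : Matrix (Fin m) (Fin m) (Quaternion ℝ),
      U * V = 1 ∧ V * U = 1 ∧ V * A * U = B := by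
  classical
  have hent : ∀ s t, qRep H J K (A s t) = qRep H' J' K' (B s t) := by
    intro s t
    ext x y
    have h0 : pRep H J K A (s, x) (t, y) = pRep H' J' K' B (s, x) (t, y) := by rw [hAB]
    simpa [pRep] using h0
  have αinj : Function.Injective (alphaMap H J K) :=
    alphaMap_injective H J K hH hJ hK hHJK
  have hfr : Module.finrank ℝ (Quaternion ℝ) = Module.finrank ℝ (Fin 4 → ℝ) := by
    rw [Quaternion.finrank_eq_four, Module.finrank_fintype_fun_eq_card, Fintype.card_fin]
  have αsurj : Function.Surjective (alphaMap H J K) :=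
    (LinearMap.injective_iff_surjective_of_finrank_eq_finrank hfr).1 αinj
  let αe := LinearEquiv.ofBijective (alphaMap H J K) ⟨αinj, αsurj⟩
  let γ : Quaternion ℝ →ₗ[ℝ] Quaternion ℝ :=
    (αe.symm : (Fin 4 → ℝ) →ₗ[ℝ] Quaternion ℝ) ∘ₗ alphaMap H' J' K'
  have hαγ : ∀ x, alphaMap H J K (γ x) = alphaMap H' J' K' x := by
    intro x
    have h1 : αe (αe.symm (alphaMap H' J' K' x)) = alphaMap H' J' K' x :=
      αe.apply_symm_apply _
    simp only [αe, γ, LinearEquiv.ofBijective_apply, LinearMap.coe_comp,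
      Function.comp_apply] at h1 ⊢
    exact h1
  have hkey : ∀ (a b : Quaternion ℝ), qRep H J K a = qRep H' J' K' b →
      ∀ y, a * γ y = γ (b * y) := by
    intro a b hab y
    apply αinj
    rw [alphaMap_mul H J K hH hJ hK hHJK, hαγ y, hαγ (b * y),
      alphaMap_mul H' J' K' hH' hJ' hK' hHJK', hab]
  have hγ1 : γ (1 : Quaternion ℝ) ≠ 0 := by
    intro h0
    have h2 : alphaMap H' J' K' 1 = 0 := by rw [← hαγ 1, h0, map_zero]
    rw [alphaMap_one] at h2
    have := congrFun h2 0
    simp at this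
  obtain ⟨w, hw⟩ := exists_u γ hγ1
  set u := γ w - γ (i1 * w) * i1 - γ (j1 * w) * j1 - γ (k1 * w) * k1 with hu
  have hcomm : ∀ s t, A s t * u = u * B s t := by
    intro s t
    have e1 := hkey _ _ (hent s t) w
    have e2 := hkey _ _ (hent s t) (i1 * w)
    have e3 := hkey _ _ (hent s t) (j1 * w)
    have e4 := hkey _ _ (hent s t) (k1 * w)
    calc A s t * u
        = A s t * γ w - (A s t * γ (i1 * w)) * i1 - (A s t * γ (j1 * w)) * j1
            - (A s t * γ (k1 * w)) * k1 := by rw [hu]; noncomm_ring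
      _ = γ (B s t * w) - γ (B s t * (i1 * w)) * i1 - γ (B s t * (j1 * w)) * j1
            - γ (B s t * (k1 * w)) * k1 := by rw [e1, e2, e3, e4]
      _ = u * B s t := proj_right_linear γ w (B s t)
  refine ⟨Matrix.diagonal (fun _ => u), Matrix.diagonal (fun _ => u⁻¹), ?_, ?_, ?_⟩
  · rw [Matrix.diagonal_mul_diagonal]
    simp [mul_inv_cancel₀ hw]
  · rw [Matrix.diagonal_mul_diagonal]
    simp [inv_mul_cancel₀ hw]
  · apply Matrix.ext
    intro s t
    rw [Matrix.mul_diagonal, Matrix.diagonal_mul, mul_assoc, hcomm s t, ← mul_assoc,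
      inv_mul_cancel₀ hw, one_mul]
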